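/- arXiv:2305.02497 — 2 statements merged into one kernel-verified Lean document; each statement's English description precedes it below -/
import Mathlib

section
/- For a ∈ [0,1] and x > 0 and w ∈ [0,1/4], the inequality ((w−1)/2)(exp((w−1)x) + exp((1−w)x)) + (2ax − 2x − 1)·w − a + 1 ≤ −a − 2(1−a)·w·x holds. -/
theorem deriv_bound_ineq (a x w : ℝ) (ha0 : 0 ≤ a) (ha1 : a ≤ 1)
    (hx : 0 < x) (hw0 : 0 ≤ w) (hw1 : w ≤ 1 / 4) :
    (w - 1) / 2 * (Real.exp ((w - 1) * x) + Real.exp ((1 - w) * x)) +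
        (2 * a * x - 2 * x - 1) * w - a + 1 ≤
      -a - 2 * (1 - a) * w * x := by
  have hAB : Real.exp ((w - 1) * x) * Real.exp ((1 - w) * x) = 1 := by
    rw [← Real.exp_add]
    have : (w - 1) * x + (1 - w) * x = 0 := by ring
    rw [this, Real.exp_zero]
  have hA := Real.exp_pos ((w - 1) * x)
  have hB := Real.exp_pos ((1 - w) * x)
  have hsum : Real.exp ((w - 1) * x) + Real.exp ((1 - w) * x) ≥ 2 := by
    nlinarith [sq_nonneg (Real.exp ((w - 1) * x) - 1)]
  nlinarith [hsum, hw1]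
end

section
/- Define g(a) = (3.2−a)/(1.2+a) − (exp(2/(a+1.2)) − exp(−2/(a+1.2)))/2 for real a ∈ [0, 0.8]. Then g(a) > 0.02 for all a ∈ [0, 0.8]. -/
noncomputable def g (a : ℝ) : ℝ :=
  (3.2 - a) / (1.2 + a) -
    (Real.exp (2 / (a + 1.2)) - Real.exp (-(2 / (a + 1.2)))) / 2

theorem g_gt (a : ℝ) (ha0 : 0 ≤ a) (ha1 : a ≤ 0.8) : g a > 0.02 := by
  have ht : (0:ℝ) < a + 1.2 := by linarith
  set x : ℝ := 2 / (a + 1.2) with hxdef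
  have hx1 : 1 ≤ x := by rw [hxdef, le_div_iff₀ ht]; linarith
  have hx2 : x ≤ 5/3 := by rw [hxdef, div_le_iff₀ ht]; linarith
  have hg : g a = 2.2 * x - 1 - (Real.exp x - Real.exp (-x)) / 2 := by
    unfold g
    rw [← hxdef, hxdef]
    have h12 : (1.2 : ℝ) + a ≠ 0 := by linarith
    field_simp
    ring
  set θ : ℝ := (5 - 3 * x) / 2 with hθdef
  have hθ0 : 0 ≤ θ := by rw [hθdef]; linarith
  have hθ1 : θ ≤ 1 := by rw [hθdef]; linarith
  have hθx : 2 * θ + 3 * x = 5 := by rw [hθdef]; ring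
  have hconv := convexOn_exp.2 (Set.mem_univ (1:ℝ)) (Set.mem_univ ((5:ℝ)/3))
      hθ0 (by linarith : (0:ℝ) ≤ 1 - θ) (by ring : θ + (1 - θ) = 1)
  simp only [smul_eq_mul] at hconv
  have hxeq : θ * 1 + (1 - θ) * (5/3) = x := by rw [hθdef]; ring
  rw [hxeq] at hconv
  -- hconv : exp x ≤ θ * exp 1 + (1 - θ) * exp (5/3)
  have h2 : Real.exp (-1) * (2 - x) ≤ Real.exp (-x) := by
    have h := Real.add_one_le_exp (1 - x)
    have hsplit : Real.exp (-x) = Real.exp (1 - x) * Real.exp (-1) := by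
      rw [← Real.exp_add]; ring_nf
    nlinarith [Real.exp_pos (-1 : ℝ)]
  have he : Real.exp 1 < 2.7182818286 := Real.exp_one_lt_d9
  have he0 : (0:ℝ) < Real.exp 1 := Real.exp_pos 1
  have hei : (0.3678 : ℝ) < Real.exp (-1) := by
    rw [Real.exp_neg, inv_eq_one_div, lt_div_iff₀ he0]
    nlinarith
  have hcube : Real.exp (5/3) ^ (3:ℕ) = Real.exp 1 ^ (5:ℕ) := by
    rw [← Real.exp_nat_mul, ← Real.exp_nat_mul]; norm_num
  have h53 : Real.exp (5/3) < 5.3 := by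
    have h5 : Real.exp 1 ^ (5:ℕ) < 2.7182818286 ^ (5:ℕ) :=
      pow_lt_pow_left₀ he he0.le (by norm_num)
    have : Real.exp (5/3) ^ (3:ℕ) < (5.3:ℝ) ^ (3:ℕ) := by
      rw [hcube]; nlinarith
    exact lt_of_pow_lt_pow_left₀ 3 (by norm_num) this
  rw [hg]
  nlinarith [mul_nonneg hθ0 (by linarith : (0:ℝ) ≤ 2.7182818286 - Real.exp 1),
    mul_nonneg (by linarith : (0:ℝ) ≤ 1 - θ) (by linarith : (0:ℝ) ≤ 5.3 - Real.exp (5/3)),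
    mul_nonneg (by linarith : (0:ℝ) ≤ 2 - x) (by linarith : (0:ℝ) ≤ Real.exp (-1) - 0.3678)]
end
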